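/- arXiv:2603.25400 — 2 statements merged into one kernel-verified Lean document; each statement's English description precedes it below -/
import Mathlib

section
/- Define ψ(m,b,T) := Φ̄(m√T − b/√T) − e^{2bm} Φ̄(m√T + b/√T), where Φ̄ is the standard Gaussian tail function. There exist universal constants C, c' > 0 such that for all m > 0 and all 0 < b ≤ √T, ψ(m,b,T) ≤ C · (b/√T) · e^{−c' m² T}. -/
open MeasureTheory ProbabilityTheory Real Set

/-- The standard Gaussian tail function `Φ̄(s) = ∫_s^∞ (2π)^{-1/2} e^{-u²/2} du`. -/
noncomputable def gaussTail (s : ℝ) : ℝ :=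
  ∫ u in Set.Ioi s, (Real.sqrt (2 * Real.pi))⁻¹ * Real.exp (-u ^ 2 / 2)

/-- `ψ(m,b,T) = Φ̄(m√T − b/√T) − e^{2bm} Φ̄(m√T + b/√T)`. -/
noncomputable def psi (m b T : ℝ) : ℝ :=
  gaussTail (m * Real.sqrt T - b / Real.sqrt T)
    - Real.exp (2 * b * m) * gaussTail (m * Real.sqrt T + b / Real.sqrt T)

lemma gauss_integrable :
    Integrable (fun u : ℝ => (Real.sqrt (2 * Real.pi))⁻¹ * Real.exp (-u ^ 2 / 2)) := by
  have h : ∀ u : ℝ, -u ^ 2 / 2 = -(1/2 : ℝ) * u ^ 2 := fun u => by ring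
  simp_rw [h]
  exact (integrable_exp_neg_mul_sq (by norm_num)).const_mul _

lemma gaussTail_nonneg (s : ℝ) : 0 ≤ gaussTail s :=
  setIntegral_nonneg measurableSet_Ioi (fun u _ => by positivity)

lemma gaussTail_sub {s t : ℝ} (h : s ≤ t) :
    gaussTail s - gaussTail t
      = ∫ u in Set.Ioc s t, (Real.sqrt (2 * Real.pi))⁻¹ * Real.exp (-u ^ 2 / 2) := by
  have key := setIntegral_union (Set.Ioc_disjoint_Ioi le_rfl) measurableSet_Ioi
    (gauss_integrable.integrableOn (s := Set.Ioc s t))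
    (gauss_integrable.integrableOn (s := Set.Ioi t))
  rw [Set.Ioc_union_Ioi_eq_Ioi h] at key
  unfold gaussTail
  linarith [key]

/-- There are universal constants `C, c' > 0` such that for all `m > 0`
and `0 < b ≤ √T`, `ψ(m,b,T) ≤ C (b/√T) e^{−c' m² T}`. -/
theorem psi_upper_bound :
    ∃ C c' : ℝ, 0 < C ∧ 0 < c' ∧
      ∀ m b T : ℝ, 0 < m → 0 < b → b ≤ Real.sqrt T →
        psi m b T ≤ C * (b / Real.sqrt T) * Real.exp (-c' * m ^ 2 * T) := by
  refine ⟨2, 1/8, by norm_num, by norm_num, ?_⟩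
  intro m b T hm hb hbT
  set sT := Real.sqrt T with hsT_def
  have hsT : 0 < sT := lt_of_lt_of_le hb hbT
  have hT : 0 < T := Real.sqrt_pos.mp hsT
  set β := b / sT with hβ_def
  have hβ : 0 < β := div_pos hb hsT
  have hβ1 : β ≤ 1 := (div_le_one hsT).mpr hbT
  set a := m * sT with ha_def
  have ha : 0 < a := mul_pos hm hsT
  have ha2 : a ^ 2 = m ^ 2 * T := by
    rw [ha_def, mul_pow, hsT_def, Real.sq_sqrt hT.le]
  -- step 1: psi ≤ gaussTail (a - β) - gaussTail (a + β)
  have hexp1 : (1 : ℝ) ≤ Real.exp (2 * b * m) :=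
    Real.one_le_exp (by positivity)
  have hstep1 : psi m b T ≤ gaussTail (a - β) - gaussTail (a + β) := by
    unfold psi
    have h0 := gaussTail_nonneg (m * Real.sqrt T + b / Real.sqrt T)
    rw [← hsT_def, ← hβ_def, ← ha_def] at h0 ⊢
    nlinarith [h0, hexp1]
  -- step 2: the pointwise bound on the density on Ioc (a-β) (a+β)
  set M := (Real.sqrt (2 * Real.pi))⁻¹ * Real.exp (1/2 - a ^ 2 / 8) with hM_def
  have hpt : ∀ u ∈ Set.Ioc (a - β) (a + β),
      (Real.sqrt (2 * Real.pi))⁻¹ * Real.exp (-u ^ 2 / 2) ≤ M := by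
    intro u hu
    have h2pi : (0:ℝ) < Real.sqrt (2 * Real.pi) := Real.sqrt_pos.mpr (by positivity)
    rw [hM_def]
    have hle : -u ^ 2 / 2 ≤ 1/2 - a ^ 2 / 8 := by
      rcases le_or_gt a 2 with hca | hca
      · nlinarith [sq_nonneg u, sq_nonneg a]
      · have hu1 : a - 1 ≤ u := by
          have := hu.1; linarith
        have hu0 : (1:ℝ) ≤ u := by linarith
        nlinarith [sq_nonneg (u - (a - 1)), sq_nonneg (a - 2)]
    exact mul_le_mul_of_nonneg_left (Real.exp_le_exp.mpr hle) (by positivity)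
  -- step 3: integral bound
  have hvol : (volume (Set.Ioc (a - β) (a + β))).toReal = 2 * β := by
    rw [Real.volume_Ioc, ENNReal.toReal_ofReal (by linarith)]
    ring
  have hstep2 : gaussTail (a - β) - gaussTail (a + β) ≤ 2 * β * M := by
    rw [gaussTail_sub (by linarith)]
    calc ∫ u in Set.Ioc (a - β) (a + β),
          (Real.sqrt (2 * Real.pi))⁻¹ * Real.exp (-u ^ 2 / 2)
        ≤ ∫ _u in Set.Ioc (a - β) (a + β), M := by
          refine setIntegral_mono_on gauss_integrable.integrableOn ?_ measurableSet_Ioc hpt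
          exact integrableOn_const measure_Ioc_lt_top.ne
      _ = 2 * β * M := by rw [setIntegral_const, measureReal_def, hvol, smul_eq_mul]
  -- step 4: 2βM ≤ 2 β exp(-a²/8)
  have hM_le : M ≤ Real.exp (-a ^ 2 / 8) := by
    rw [hM_def]
    have hsq : Real.exp (1/2) ≤ Real.sqrt (2 * Real.pi) := by
      rw [show (1/2 : ℝ) = 1/2 by rfl]
      have h1 : Real.exp (1/2) ^ 2 = Real.exp 1 := by
        rw [← Real.exp_nat_mul]; norm_num
      have h2 : Real.exp 1 < 2 * Real.pi := by
        have := Real.exp_one_lt_d9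
        have := Real.pi_gt_three
        linarith
      nlinarith [Real.sqrt_nonneg (2 * Real.pi), Real.sq_sqrt (by positivity : (0:ℝ) ≤ 2 * Real.pi), Real.exp_pos (1/2 : ℝ)]
    have h2pi : (0:ℝ) < Real.sqrt (2 * Real.pi) := Real.sqrt_pos.mpr (by positivity)
    have : Real.exp (1/2 - a ^ 2 / 8) = Real.exp (1/2) * Real.exp (-a ^ 2 / 8) := by
      rw [← Real.exp_add]; ring_nf
    rw [this]
    rw [inv_mul_le_iff₀ h2pi] -- M' ≤ e^{..} ↔ ...
    calc Real.exp (1/2) * Real.exp (-a ^ 2 / 8)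
        ≤ Real.sqrt (2 * Real.pi) * Real.exp (-a ^ 2 / 8) := by
          exact mul_le_mul_of_nonneg_right hsq (Real.exp_pos _).le
      _ = Real.sqrt (2 * Real.pi) * Real.exp (-a ^ 2 / 8) := rfl
  have hfinal : psi m b T ≤ 2 * β * Real.exp (-a ^ 2 / 8) := by
    calc psi m b T ≤ gaussTail (a - β) - gaussTail (a + β) := hstep1
      _ ≤ 2 * β * M := hstep2
      _ ≤ 2 * β * Real.exp (-a ^ 2 / 8) := by
          exact mul_le_mul_of_nonneg_left hM_le (by positivity)
  have hexp_eq : Real.exp (-a ^ 2 / 8) = Real.exp (-(1/8) * m ^ 2 * T) := by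
    rw [ha2]; ring_nf
  calc psi m b T ≤ 2 * β * Real.exp (-a ^ 2 / 8) := hfinal
    _ = 2 * β * Real.exp (-(1/8) * m ^ 2 * T) := by rw [hexp_eq]
end

section
/- Define ψ(m,b,T) := Φ̄(m√T − b/√T) − e^{2bm} Φ̄(m√T + b/√T), where Φ̄ is the standard Gaussian tail function. There exist universal constants C, c > 0 such that for all m > 0 and all 0 < b ≤ √T, ψ(m,b,T) ≥ C⁻¹ · (b/√T) · e^{−c m² T}. -/
open MeasureTheory ProbabilityTheory Real Set

/-- The standard Gaussian density. -/
noncomputable def gaussD (u : ℝ) : ℝ := (Real.sqrt (2 * Real.pi))⁻¹ * Real.exp (-u ^ 2 / 2)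

lemma gaussD_pos (u : ℝ) : 0 < gaussD u := by
  have h2π : 0 < 2 * Real.pi := by positivity
  exact mul_pos (inv_pos.2 (Real.sqrt_pos.2 h2π)) (Real.exp_pos _)

lemma gaussD_integrable : Integrable gaussD := by
  have h : Integrable fun u : ℝ => (Real.sqrt (2 * Real.pi))⁻¹ * Real.exp (-(1/2 : ℝ) * u ^ 2) :=
    (integrable_exp_neg_mul_sq (by norm_num)).const_mul _
  refine h.congr (Filter.Eventually.of_forall fun u => ?_)
  unfold gaussD; ring_nf

lemma gaussD_continuous : Continuous gaussD := by
  unfold gaussD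
  continuity

/-- Translation of the Gaussian tail integral. -/
lemma gaussTail_shift (s c : ℝ) :
    gaussTail s = ∫ u in Set.Ioi (s - c), gaussD (u + c) := by
  unfold gaussTail
  have h1 : (∫ u in Set.Ioi s, (Real.sqrt (2 * Real.pi))⁻¹ * Real.exp (-u ^ 2 / 2))
      = ∫ u in Set.Ioi s, gaussD u := rfl
  rw [h1, ← integral_indicator measurableSet_Ioi, ← integral_indicator measurableSet_Ioi]
  rw [← integral_add_right_eq_self (fun u => (Set.Ioi s).indicator gaussD u) c]
  congr 1
  funext u
  by_cases h : u + c ∈ Set.Ioi s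
  · have h' : u ∈ Set.Ioi (s - c) := by
      simp only [Set.mem_Ioi] at h ⊢; linarith
    rw [Set.indicator_of_mem h, Set.indicator_of_mem h']
  · have h' : u ∉ Set.Ioi (s - c) := by
      simp only [Set.mem_Ioi] at h ⊢; linarith
    rw [Set.indicator_of_notMem h, Set.indicator_of_notMem h']

lemma exp_conv {β : ℝ} (hβ0 : 0 ≤ β) (hβ1 : β ≤ 1) :
    β * (1 - Real.exp (-1)) ≤ 1 - Real.exp (-β) := by
  have h := convexOn_exp.2 (Set.mem_univ (0 : ℝ)) (Set.mem_univ (-1 : ℝ))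
    (by linarith : (0:ℝ) ≤ 1 - β) hβ0 (by ring)
  simp only [smul_eq_mul, mul_zero, mul_neg, mul_one, zero_add, Real.exp_zero] at h
  nlinarith [h]

set_option maxHeartbeats 2000000 in
/-- There are universal constants `C, c > 0` such that for all `m > 0`
and `0 < b ≤ √T`, `ψ(m,b,T) ≥ C⁻¹ (b/√T) e^{−c m² T}`. -/
theorem psi_lower_bound :
    ∃ C c : ℝ, 0 < C ∧ 0 < c ∧
      ∀ m b T : ℝ, 0 < m → 0 < b → b ≤ Real.sqrt T →
        C⁻¹ * (b / Real.sqrt T) * Real.exp (-c * m ^ 2 * T) ≤ psi m b T := by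
  refine ⟨2 * Real.sqrt (2 * Real.pi) * Real.exp 1 / (1 - Real.exp (-1)), 1, ?_, one_pos, ?_⟩
  · have h1 : Real.exp (-1) < 1 := by
      rw [Real.exp_lt_one_iff]; norm_num
    have : 0 < 1 - Real.exp (-1) := by linarith
    positivity
  intro m b T hm hb hbT
  have hsT : 0 < Real.sqrt T := lt_of_lt_of_le hb hbT
  have hT : 0 < T := by
    by_contra h
    push_neg at h
    rw [Real.sqrt_eq_zero_of_nonpos h] at hsT
    exact lt_irrefl _ hsT
  set a : ℝ := m * Real.sqrt T with ha_def
  set β : ℝ := b / Real.sqrt T with hβ_def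
  have ha : 0 < a := mul_pos hm hsT
  have hβ0 : 0 < β := div_pos hb hsT
  have hβ1 : β ≤ 1 := by
    rw [hβ_def, div_le_one hsT]; exact hbT
  have hbm : b * m = a * β := by
    rw [ha_def, hβ_def]; field_simp
  set A : ℝ := a - β with hA_def
  -- the exponential factor
  set E : ℝ → ℝ := fun u => Real.exp (-(2 * β) * (u - A)) with hE_def
  have haT : a ^ 2 = m ^ 2 * T := by
    rw [ha_def, mul_pow, Real.sq_sqrt hT.le]
  have key : ∀ u : ℝ, Real.exp (2 * b * m) * gaussD (u + 2 * β) = E u * gaussD u := by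
    intro u
    have e1 : 2 * b * m + -(u + 2 * β) ^ 2 / 2 = -(2 * β) * (u - A) + -u ^ 2 / 2 := by
      rw [hA_def]; linear_combination 2 * hbm
    calc Real.exp (2 * b * m) * gaussD (u + 2 * β)
        = (Real.sqrt (2 * Real.pi))⁻¹ * Real.exp (2 * b * m + -(u + 2 * β) ^ 2 / 2) := by
          unfold gaussD; rw [Real.exp_add]; ring
      _ = (Real.sqrt (2 * Real.pi))⁻¹ * Real.exp (-(2 * β) * (u - A) + -u ^ 2 / 2) := by
          rw [e1]
      _ = E u * gaussD u := by
          unfold gaussD; simp only [hE_def]; rw [Real.exp_add]; ring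
  -- Step 1: e^{2bm} Φ̄(a+β) = ∫_{u>A} E u * gaussD u
  have step1 : Real.exp (2 * b * m) * gaussTail (a + β)
      = ∫ u in Set.Ioi A, E u * gaussD u := by
    have hshift : gaussTail (a + β) = ∫ u in Set.Ioi A, gaussD (u + 2 * β) := by
      have : A = (a + β) - 2 * β := by rw [hA_def]; ring
      rw [this, gaussTail_shift (a + β) (2 * β)]
    rw [hshift, ← integral_const_mul]
    exact setIntegral_congr_fun measurableSet_Ioi (fun u _ => key u)
  -- integrability facts
  have hint_g : IntegrableOn gaussD (Set.Ioi A) := gaussD_integrable.integrableOn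
  have hint_Eg : IntegrableOn (fun u => E u * gaussD u) (Set.Ioi A) := by
    have h1 : Integrable (fun u : ℝ => gaussD (u + 2 * β)) :=
      gaussD_integrable.comp_add_right (2 * β)
    have h2 : Integrable (fun u : ℝ => Real.exp (2 * b * m) * gaussD (u + 2 * β)) :=
      h1.const_mul _
    have heq : (fun u => E u * gaussD u)
        = fun u : ℝ => Real.exp (2 * b * m) * gaussD (u + 2 * β) := by
      funext u; exact (key u).symm
    rw [heq]
    exact h2.integrableOn
  -- Step 2: ψ = ∫_{u>A} (1 - E u) * gaussD u
  have step2 : psi m b T = ∫ u in Set.Ioi A, (1 - E u) * gaussD u := by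
    unfold psi
    have h1 : m * Real.sqrt T - b / Real.sqrt T = A := rfl
    have h2 : m * Real.sqrt T + b / Real.sqrt T = a + β := rfl
    rw [h1, h2, step1]
    have h3 : gaussTail A = ∫ u in Set.Ioi A, gaussD u := rfl
    rw [h3, ← integral_sub hint_g hint_Eg]
    refine setIntegral_congr_fun measurableSet_Ioi (fun u _ => ?_)
    ring
  -- Step 3: restrict to S = Ioc (A + 1/2) (A + 1)
  set S : Set ℝ := Set.Ioc (A + 1/2) (A + 1) with hS_def
  have hint_sub : IntegrableOn (fun u => (1 - E u) * gaussD u) (Set.Ioi A) := by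
    refine (hint_g.sub hint_Eg).congr (Filter.Eventually.of_forall fun u => ?_)
    simp only [Pi.sub_apply]; ring
  have hSsub : S ⊆ Set.Ioi A := by
    intro u hu
    rw [hS_def, Set.mem_Ioc] at hu
    rw [Set.mem_Ioi]
    linarith [hu.1]
  have step3 : (∫ u in S, (1 - E u) * gaussD u)
      ≤ ∫ u in Set.Ioi A, (1 - E u) * gaussD u := by
    refine setIntegral_mono_set hint_sub ?_ (HasSubset.Subset.eventuallyLE hSsub)
    filter_upwards [ae_restrict_mem measurableSet_Ioi] with u hu
    have hu' : A < u := hu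
    have hE1 : E u ≤ 1 := by
      rw [hE_def]
      simp only
      rw [← Real.exp_zero]
      apply Real.exp_le_exp.2
      nlinarith
    have := (gaussD_pos u).le
    simp only [Pi.zero_apply]
    nlinarith
  -- Step 4: pointwise lower bound on S
  set K : ℝ := β * (1 - Real.exp (-1)) * ((Real.sqrt (2 * Real.pi))⁻¹ * Real.exp (-a ^ 2 - 1))
    with hK_def
  have step4 : ∀ u ∈ S, K ≤ (1 - E u) * gaussD u := by
    intro u hu
    rw [hS_def, Set.mem_Ioc] at hu
    have h1 : 1 - E u ≥ β * (1 - Real.exp (-1)) := by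
      have hEle : E u ≤ Real.exp (-β) := by
        rw [hE_def]
        simp only
        apply Real.exp_le_exp.2
        nlinarith [hu.1]
      have := exp_conv hβ0.le hβ1
      linarith
    have h2 : gaussD u ≥ (Real.sqrt (2 * Real.pi))⁻¹ * Real.exp (-a ^ 2 - 1) := by
      unfold gaussD
      apply mul_le_mul_of_nonneg_left _ (by positivity)
      apply Real.exp_le_exp.2
      have hub : u ≤ a + 1 := by
        have := hu.2; rw [hA_def] at this; linarith
      have hlb : -(a + 1) ≤ u := by
        have := hu.1; rw [hA_def] at this; linarith
      have hsq : u ^ 2 ≤ (a + 1) ^ 2 := by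
        nlinarith [mul_nonneg (by linarith : (0:ℝ) ≤ a + 1 - u) (by linarith : (0:ℝ) ≤ a + 1 + u)]
      nlinarith [hsq, sq_nonneg (a - 1)]
    have hpos1 : 0 ≤ β * (1 - Real.exp (-1)) := by
      have : Real.exp (-1) < 1 := by rw [Real.exp_lt_one_iff]; norm_num
      nlinarith
    have hpos2 : 0 ≤ (Real.sqrt (2 * Real.pi))⁻¹ * Real.exp (-a ^ 2 - 1) := by positivity
    rw [hK_def]
    exact mul_le_mul h1 h2 hpos2 (le_trans hpos1 h1)
  -- combine: ∫_S ≥ K * (1/2)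
  have hSmeas : MeasurableSet S := measurableSet_Ioc
  have hvol : (volume S).toReal = 1/2 := by
    rw [hS_def, Real.volume_Ioc]
    rw [ENNReal.toReal_ofReal (by norm_num)]
    norm_num
  have step5 : K * (1/2) ≤ ∫ u in S, (1 - E u) * gaussD u := by
    have hconst : (∫ _ in S, K) = K * (1/2) := by
      rw [setIntegral_const]; show (volume S).toReal • K = _; rw [hvol, smul_eq_mul, mul_comm]
    rw [← hconst]
    have hfin : volume S < ⊤ := by
      rw [hS_def, Real.volume_Ioc]; exact ENNReal.ofReal_lt_top
    refine setIntegral_mono_on (integrableOn_const hfin.ne)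
      (hint_sub.mono_set hSsub) hSmeas step4
  -- final arithmetic
  rw [step2]
  refine le_trans ?_ (le_trans step5 step3)
  have hexp1 : (0:ℝ) < 1 - Real.exp (-1) := by
    have : Real.exp (-1) < 1 := by rw [Real.exp_lt_one_iff]; norm_num
    linarith
  have hsqrt : 0 < Real.sqrt (2 * Real.pi) := Real.sqrt_pos.2 (by positivity)
  rw [hK_def]
  have heq : β * (1 - Real.exp (-1)) * ((Real.sqrt (2 * Real.pi))⁻¹ * Real.exp (-a^2 - 1)) * (1/2)
      = (2 * Real.sqrt (2 * Real.pi) * Real.exp 1 / (1 - Real.exp (-1)))⁻¹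
        * (b / Real.sqrt T) * Real.exp (-1 * m ^ 2 * T) := by
    have h0 : (-1 : ℝ) * m ^ 2 * T = -a ^ 2 := by rw [haT]; ring
    rw [← hβ_def, h0]
    have h1 : Real.exp (-a ^ 2 - 1) = Real.exp (-a ^ 2) * Real.exp (-1) := by
      rw [← Real.exp_add]; ring_nf
    rw [h1, Real.exp_neg 1]
    have h2 : Real.sqrt (2 * Real.pi) ≠ 0 := ne_of_gt hsqrt
    have h3 : (1 : ℝ) - Real.exp (-1) ≠ 0 := ne_of_gt hexp1
    have h4 : Real.exp 1 ≠ 0 := Real.exp_ne_zero 1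
    field_simp
  rw [← heq]
end
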